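/- Let β = (1+√5)/2 and i ≥ 2. Then the set B_i^0 = {x ∈ [1/β, 1] : T_0(x) > 1, T_1^j(T_0(x)) > 1 for all 1 ≤ j ≤ i−2, and T_1^{i-1}(T_0(x)) ∈ (1/β, 1]} equals the interval (∑_{n=2}^{i+1} β^{-n}, ∑_{n=2}^{i+2} β^{-n}]. -/

import Mathlib

def T0 (β x : ℝ) : ℝ := β * x
def T1 (β x : ℝ) : ℝ := β * x - 1

lemma iter_formula (β : ℝ) (hb : β^2 = β + 1) (k : ℕ) (x : ℝ) :
    (T1 β)^[k] (T0 β x) = β^(k+1) * (x-1) + β := by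
  induction k with
  | zero => simp [T0]; ring
  | succ n ih =>
    rw [Function.iterate_succ_apply', ih, T1]
    have : β^(n+1+1) = β * β^(n+1) := by ring
    rw [this]
    linear_combination hb

lemma sum_geo (q : ℝ) (hq : q^2 = 1 - q) (m : ℕ) (hm : 1 ≤ m) :
    ∑ n ∈ Finset.Icc 2 (m+1), q^n = 1 - q^m := by
  induction m, hm using Nat.le_induction with
  | base => rw [Finset.Icc_self, Finset.sum_singleton, hq, pow_one]
  | succ n hn ih =>
    rw [Finset.sum_Icc_succ_top (by omega : 2 ≤ n+1+1), ih]
    linear_combination q^n * hq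

theorem B0_interval (β : ℝ) (hβ : β = (1 + Real.sqrt 5)/2) (i : ℕ) (hi : 2 ≤ i) :
    {x : ℝ | x ∈ Set.Icc (1/β) 1 ∧ T0 β x > 1 ∧
        (∀ j : ℕ, 1 ≤ j → j ≤ i - 2 → (T1 β)^[j] (T0 β x) > 1) ∧
        (T1 β)^[i-1] (T0 β x) ∈ Set.Ioc (1/β) 1} =
      Set.Ioc (∑ n ∈ Finset.Icc 2 (i+1), (1/β)^n) (∑ n ∈ Finset.Icc 2 (i+2), (1/β)^n) := by
  have h5 : Real.sqrt 5 ^ 2 = 5 := Real.sq_sqrt (by norm_num)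
  have hs2 : (2:ℝ) < Real.sqrt 5 := by nlinarith [Real.sqrt_nonneg 5]
  have hs3 : Real.sqrt 5 < 3 := by nlinarith [Real.sqrt_nonneg 5]
  have hβ1 : 1 < β := by rw [hβ]; nlinarith
  have hβ2 : β < 2 := by rw [hβ]; nlinarith
  have hβ0 : 0 < β := by linarith
  have hb2 : β^2 = β + 1 := by rw [hβ]; linear_combination h5/4
  set q : ℝ := β - 1 with hqdef
  have hq : 1/β = q := by
    rw [div_eq_iff (by positivity), hqdef]
    linear_combination -hb2
  have hq0 : 0 < q := by rw [hqdef]; linarith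
  have hq1 : q < 1 := by rw [hqdef]; linarith
  have hq2 : q^2 = 1 - q := by rw [hqdef]; linear_combination hb2
  have hbq : β * q = 1 := by rw [hqdef]; linear_combination hb2
  have hi1 : i - 1 + 1 = i := by omega
  have hpq : β^i * q^i = 1 := by rw [← mul_pow, hbq, one_pow]
  have hp : (0:ℝ) < β^i := pow_pos hβ0 i
  rw [hq, sum_geo q hq2 i (by omega), show i+2 = (i+1)+1 from rfl,
    sum_geo q hq2 (i+1) (by omega)]
  ext x
  simp only [Set.mem_setOf_eq, Set.mem_Icc, Set.mem_Ioc, iter_formula β hb2, hi1]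
  simp only [T0]
  constructor
  · rintro ⟨⟨hx1, hx2⟩, h0, hmid, hf1, hf2⟩
    constructor
    · have h2 : β^i * (-q^i) < β^i * (x-1) := by
        rw [mul_neg, hpq]
        have : q - β = -1 := by rw [hqdef]; ring
        linarith
      have h3 := (mul_lt_mul_iff_right₀ hp).mp h2
      linarith
    · have h2 : β^i * (x-1) ≤ β^i * (-q^(i+1)) := by
        have he : β^i * (-q^(i+1)) = -q := by linear_combination (-q) * hpq
        have : (1:ℝ) - β = -q := by rw [hqdef]; ring
        linarith
      have h3 := (mul_le_mul_iff_right₀ hp).mp h2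
      linarith
  · rintro ⟨ha, hb⟩
    have hqi : q^i ≤ q^2 := pow_le_pow_of_le_one (le_of_lt hq0) (le_of_lt hq1) hi
    have hxq : q < x := by linarith
    have hflow : q < β^i * (x-1) + β := by
      have h1 : β^i * (-q^i) < β^i * (x-1) :=
        mul_lt_mul_of_pos_left (by linarith) hp
      rw [mul_neg, hpq] at h1
      have : q - β = -1 := by rw [hqdef]; ring
      linarith
    have hfhigh : β^i * (x-1) + β ≤ 1 := by
      have h1 : β^i * (x-1) ≤ β^i * (-q^(i+1)) :=
        mul_le_mul_of_nonneg_left (by linarith) (le_of_lt hp)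
      have he : β^i * (-q^(i+1)) = -q := by linear_combination (-q) * hpq
      have : (1:ℝ) - β = -q := by rw [hqdef]; ring
      linarith
    refine ⟨⟨by linarith, ?_⟩, ?_, ?_, hflow, hfhigh⟩
    · have : (0:ℝ) < q^(i+1) := pow_pos hq0 _
      linarith
    · have h1 := mul_lt_mul_of_pos_left hxq hβ0
      rw [hbq] at h1
      linarith
    · intro j hj1 hj2
      have hj : j + 2 ≤ i := by omega
      have hqj : q^i ≤ q^(j+2) := pow_le_pow_of_le_one (le_of_lt hq0) (le_of_lt hq1) hj
      have hpj : β^(j+1) * q^(j+1) = 1 := by rw [← mul_pow, hbq, one_pow]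
      have hpj0 : (0:ℝ) < β^(j+1) := pow_pos hβ0 _
      have h1 : β^(j+1) * (-q^(j+2)) < β^(j+1) * (x-1) :=
        mul_lt_mul_of_pos_left (by linarith) hpj0
      have he : β^(j+1) * (-q^(j+2)) = -q := by linear_combination (-q) * hpj
      have : (1:ℝ) - β = -q := by rw [hqdef]; ring
      linarith
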